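/- For a lattice path ν beginning with a north step and ending with an east step, the set of ν-Dyck paths with exactly i high peaks is in bijection with the set of ν-Dyck paths with exactly i+1 peaks. -/

import Mathlib

/-- Steps of a (Schröder) lattice path: north, east, diagonal. -/
inductive Step : Type
  | N | E | D
deriving DecidableEq, Repr

/-- Total horizontal displacement of a path. -/
def eLen (p : List Step) : ℕ := p.count Step.E + p.count Step.D

/-- Total vertical displacement of a path. -/
def nLen (p : List Step) : ℕ := p.count Step.N + p.count Step.D

/-- A lattice path uses only `N` and `E` steps. -/
def IsLatticePath (ν : List Step) : Prop := Step.D ∉ ν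

/-- `colVal p x` is twice the starting height of the step of `p` crossing the vertical
strip between abscissas `x` and `x+1`, plus `1` if that step is diagonal.  Comparing these
values columnwise is equivalent to comparing the heights of the paths over each strip. -/
def colVal : List Step → ℕ → ℕ
  | [], _ => 0
  | Step.N :: p, x => colVal p x + 2
  | Step.E :: _, 0 => 0
  | Step.E :: p, x+1 => colVal p x
  | Step.D :: _, 0 => 1
  | Step.D :: p, x+1 => colVal p x + 2

/-- `π` stays weakly above `ρ` (same endpoints intended). -/
def WeaklyAbove (π ρ : List Step) : Prop := ∀ x, colVal ρ x ≤ colVal π x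

/-- Replace every peak (consecutive `NE`) of a path by a diagonal step; applied to `ν`
this gives the path `μ` of the large ν-Schröder path definition. -/
def cutPeaks : List Step → List Step
  | [] => []
  | Step.N :: Step.E :: p => Step.D :: cutPeaks p
  | s :: p => s :: cutPeaks p

/-- A ν-Dyck path: an `N,E` path with the same endpoints as `ν` staying weakly above `ν`. -/
def IsNuDyck (ν π : List Step) : Prop :=
  Step.D ∉ π ∧ eLen π = eLen ν ∧ nLen π = nLen ν ∧ WeaklyAbove π ν

/-- A (small) ν-Schröder path: an `N,E,D` path with the same endpoints as `ν` staying weakly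
above `ν` (this automatically forbids diagonal steps on the ν-diagonal). -/
def IsSmallSchroder (ν π : List Step) : Prop :=
  eLen π = eLen ν ∧ nLen π = nLen ν ∧ WeaklyAbove π ν

/-- A large ν-Schröder path: an `N,E,D` path with the same endpoints as `ν` staying weakly
above the path obtained from `ν` by replacing each peak by a diagonal step. -/
def IsLargeSchroder (ν π : List Step) : Prop :=
  eLen π = eLen ν ∧ nLen π = nLen ν ∧ WeaklyAbove π (cutPeaks ν)

/-- Number of peaks (consecutive `NE` pairs). -/
def peaks (p : List Step) : ℕ := (p.zip p.tail).count (Step.N, Step.E)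

/-- Number of valleys (consecutive `EN` pairs). -/
def valleys (p : List Step) : ℕ := (p.zip p.tail).count (Step.E, Step.N)

/-- Lattice points at which valleys of a path occur (starting the path at `(x,y)`). -/
def valleyPts : List Step → ℕ → ℕ → List (ℕ × ℕ)
  | [], _, _ => []
  | Step.E :: p, x, y =>
      (if p.head? = some Step.N then [(x+1, y)] else []) ++ valleyPts p (x+1) y
  | Step.N :: p, x, y => valleyPts p x (y+1)
  | Step.D :: p, x, y => valleyPts p (x+1) (y+1)

/-- Lattice points at which high peaks (peaks strictly above `ν`) of a path occur. -/
def highPeakPts (ν : List Step) : List Step → ℕ → ℕ → List (ℕ × ℕ)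
  | [], _, _ => []
  | Step.N :: p, x, y =>
      (if p.head? = some Step.E ∧ colVal ν x < 2*(y+1) then [(x, y+1)] else []) ++
        highPeakPts ν p x (y+1)
  | Step.E :: p, x, y => highPeakPts ν p (x+1) y
  | Step.D :: p, x, y => highPeakPts ν p (x+1) (y+1)

/-- Number of high peaks of `π` relative to `ν`. -/
def highPeaks (ν π : List Step) : ℕ := (highPeakPts ν π 0 0).length

/-- j-th ν-Narayana number: number of ν-Dyck paths with exactly `j` valleys. -/
noncomputable def Nar (ν : List Step) (j : ℕ) : ℕ :=
  Nat.card {π : List Step // IsNuDyck ν π ∧ valleys π = j}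

/-- Number of small ν-Schröder paths with exactly `i` diagonal steps. -/
noncomputable def schNum (ν : List Step) (i : ℕ) : ℕ :=
  Nat.card {π : List Step // IsSmallSchroder ν π ∧ π.count Step.D = i}

/-- `lowH ν x` is the lowest height of a point of `ν` at abscissa `x`. -/
def lowH : List Step → ℕ → ℕ
  | _, 0 => 0
  | [], _+1 => 0
  | Step.N :: p, x+1 => lowH p (x+1) + 1
  | Step.E :: p, x+1 => lowH p x
  | Step.D :: p, x+1 => lowH p x + 1

/-- The lowest lattice path from `(0,0)` to `(b,a)` weakly above the line segment
from `(0,0)` to `(b,a)`. -/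
def nuAB (a b : ℕ) : List Step :=
  (List.range b).flatMap (fun x =>
    List.replicate (((x+1)*a + b - 1)/b - (x*a + b - 1)/b) Step.N ++ [Step.E])

/-- Number of large rational `(a,b)`-Schröder paths with `i` diagonal steps. -/
noncomputable def largeCount (a b i : ℕ) : ℕ :=
  Nat.card {π : List Step // IsLargeSchroder (nuAB a b) π ∧ π.count Step.D = i}

/-- Number of small rational `(a,b)`-Schröder paths with `i` diagonal steps. -/
noncomputable def smallCount (a b i : ℕ) : ℕ :=
  Nat.card {π : List Step // IsSmallSchroder (nuAB a b) π ∧ π.count Step.D = i}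

/-- Binomial coefficient with an integer lower entry (zero when negative). -/
def chooseZ (n : ℕ) (k : ℤ) : ℕ := if 0 ≤ k then n.choose k.toNat else 0

/-- The region weakly above `ν` in the rectangle `[0,b] × [0,a]`. -/
def InRegion (ν : List Step) (p : ℕ × ℕ) : Prop :=
  p.1 ≤ eLen ν ∧ p.2 ≤ nLen ν ∧ lowH ν p.1 ≤ p.2

/-- Two points of the region are ν-incompatible if one is strictly southwest of the other and
the rectangle they span lies in the region (equivalently its bottom-right corner does). -/
def Incompat (ν : List Step) (p q : ℕ × ℕ) : Prop :=
  ((p.1 < q.1 ∧ p.2 < q.2) ∨ (q.1 < p.1 ∧ q.2 < p.2)) ∧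
    InRegion ν (max p.1 q.1, min p.2 q.2)

/-- A ν-binary tree: a maximal set of pairwise ν-compatible points of the region. -/
def IsBinaryTree (ν : List Step) (T : Finset (ℕ × ℕ)) : Prop :=
  (∀ p ∈ T, InRegion ν p) ∧ (∀ p ∈ T, ∀ q ∈ T, ¬ Incompat ν p q) ∧
    ∀ r, InRegion ν r → (∀ p ∈ T, ¬ Incompat ν r p) → r ∈ T

/-- A ν-Schröder tree: pairwise ν-compatible points of the region containing the root
`(0,a)` and meeting every row and every column. -/
def IsSchroderTree (ν : List Step) (T : Finset (ℕ × ℕ)) : Prop :=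
  (∀ p ∈ T, InRegion ν p) ∧ (∀ p ∈ T, ∀ q ∈ T, ¬ Incompat ν p q) ∧
    (0, nLen ν) ∈ T ∧ (∀ y ≤ nLen ν, ∃ p ∈ T, p.2 = y) ∧ (∀ x ≤ eLen ν, ∃ p ∈ T, p.1 = x)

/-- One contraction step: delete a node, provided the result is still a ν-Schröder tree. -/
def ContractStep (ν : List Step) (T T' : Finset (ℕ × ℕ)) : Prop :=
  ∃ q ∈ T, T' = T.erase q ∧ IsSchroderTree ν T'

/-- `p` is a leaf of the (plane tree associated to the) node set `T`: no node strictly below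
it in its column and none strictly to its right in its row. -/
def IsLeafIn (T : Finset (ℕ × ℕ)) (p : ℕ × ℕ) : Prop :=
  (∀ q ∈ T, ¬(q.1 = p.1 ∧ q.2 < p.2)) ∧ (∀ q ∈ T, ¬(q.2 = p.2 ∧ p.1 < q.1))

/-- Starting points of vertical runs and ending points of horizontal runs of `ν`. -/
def leafPts (ν : List Step) : Finset (ℕ × ℕ) :=
  (valleyPts ν 0 0).toFinset ∪ (if ν.head? = some Step.N then {((0 : ℕ), (0 : ℕ))} else ∅) ∪
    (if ν.getLast? = some Step.E then {(eLen ν, nLen ν)} else ∅)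

/-- `horizNu ν x y`: maximal number of east steps that can be placed starting at `(x,y)`
before crossing `ν` (staying within the bounding rectangle). -/
def horizNu (ν : List Step) (x y : ℕ) : ℕ :=
  ((Finset.Icc 1 (eLen ν - x)).filter (fun k => lowH ν (x + k) ≤ y)).card

/-- No `N` step of the given path (started at `(x,y)`) has initial point with
`horizNu`-value `h`. -/
def noNAt (ν : List Step) (h : ℕ) : List Step → ℕ → ℕ → Prop
  | [], _, _ => True
  | Step.N :: p, x, y => horizNu ν x y ≠ h ∧ noNAt ν h p x (y+1)
  | Step.E :: p, x, y => noNAt ν h p (x+1) y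
  | Step.D :: p, x, y => noNAt ν h p (x+1) (y+1)

/-- Right contraction: replace a consecutive `EN` pair (a valley) by a `D` step. -/
def RightC (μ lam : List Step) : Prop :=
  ∃ p q, μ = p ++ Step.E :: Step.N :: q ∧ lam = p ++ Step.D :: q

/-- Left contraction: delete an `E` step together with the most recent preceding `N` step
whose initial point has the same `horizNu` statistic as the initial point of the `E` step,
shift the intermediate subpath, and place a `D` step at the initial point of the `N` step. -/
def LeftC (ν μ lam : List Step) : Prop :=
  ∃ p m q, μ = p ++ Step.N :: (m ++ Step.E :: q) ∧ lam = p ++ Step.D :: (m ++ q) ∧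
    horizNu ν (eLen p) (nLen p)
      = horizNu ν (eLen (p ++ Step.N :: m)) (nLen (p ++ Step.N :: m)) ∧
    noNAt ν (horizNu ν (eLen (p ++ Step.N :: m)) (nLen (p ++ Step.N :: m)))
      m (eLen p) (nLen p + 1)

/-- Diagonal contraction: delete an `E` step ending at the initial point `r` of a `D` step,
together with the most recent preceding `N` step whose initial point `s` satisfies
`horizNu s = horizNu r`, shift the intermediate subpath, and place a `D` step at `s`. -/
def DiagC (ν μ lam : List Step) : Prop :=
  ∃ p m q, μ = p ++ Step.N :: (m ++ Step.E :: Step.D :: q) ∧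
    lam = p ++ Step.D :: (m ++ Step.D :: q) ∧
    horizNu ν (eLen p) (nLen p)
      = horizNu ν (eLen (p ++ Step.N :: m) + 1) (nLen (p ++ Step.N :: m)) ∧
    noNAt ν (horizNu ν (eLen (p ++ Step.N :: m) + 1) (nLen (p ++ Step.N :: m)))
      m (eLen p) (nLen p + 1)

/-- Cover relation of the contraction poset of ν-Schröder paths. -/
def Covers (ν μ lam : List Step) : Prop :=
  IsSmallSchroder ν μ ∧ IsSmallSchroder ν lam ∧
    (RightC μ lam ∨ LeftC ν μ lam ∨ DiagC ν μ lam)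

/-- The Morse matching: `σ` (having a `D` step preceded by no valley) is matched with the
path `π` obtained by replacing the first such `D` step by `EN`. -/
def MorseM (ν : List Step) : Set (List Step × List Step) :=
  { z | ∃ p q, Step.D ∉ p ∧ valleys p = 0 ∧
      z.2 = p ++ Step.D :: q ∧ z.1 = p ++ Step.E :: Step.N :: q ∧ IsSmallSchroder ν z.2 }

/-- Twice the area between a small ν-Schröder path and `ν`. -/
def area2 (ν π : List Step) : ℕ :=
  ∑ x ∈ Finset.range (eLen ν), (colVal π x - colVal ν x)

/-- An `(I,J̄)`-forest: increasing, non-crossing arcs. -/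
def IsIJForest (I J : Finset ℕ) (F : Finset (ℕ × ℕ)) : Prop :=
  (∀ a ∈ F, a.1 ∈ I ∧ a.2 ∈ J ∧ a.1 < a.2) ∧
    (∀ a ∈ F, ∀ a' ∈ F, ¬(a.1 < a'.1 ∧ a'.1 < a.2 ∧ a.2 < a'.2))

/-- A covering `(I,J̄)`-forest: contains the arc `(1,n)` and has no isolated node. -/
def IsCoveringForest (n : ℕ) (I J : Finset ℕ) (F : Finset (ℕ × ℕ)) : Prop :=
  IsIJForest I J F ∧ (1, n) ∈ F ∧
    (∀ i ∈ I, ∃ a ∈ F, a.1 = i) ∧ (∀ j ∈ J, ∃ a ∈ F, a.2 = j)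

/-- The lattice path read off from the interleaving of `I` and `J̄` (elements `2,…,n-1`,
`E` for elements of `I`, `N` for the others). -/
def nuOf (n : ℕ) (I : Finset ℕ) : List Step :=
  (List.range' 2 (n - 2)).map (fun k => if k ∈ I then Step.E else Step.N)


instance : Fintype Step :=
  ⟨⟨{Step.N, Step.E, Step.D}, by decide⟩, fun x => by cases x <;> decide⟩

lemma step_length (l : List Step) :
    l.length = l.count Step.N + l.count Step.E + l.count Step.D := by
  induction l with
  | nil => simp
  | cons s p ih => cases s <;> simp [List.count_cons, ih] <;> omega

lemma colVal_even (p : List Step) (hp : Step.D ∉ p) : ∀ x, colVal p x % 2 = 0 := by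
  induction p with
  | nil => intro x; simp [colVal]
  | cons s p ih =>
    have hp' : Step.D ∉ p := fun h => hp (List.mem_cons_of_mem _ h)
    intro x
    cases s with
    | N => have := ih hp' x; simp [colVal]; omega
    | E => cases x with
      | zero => simp [colVal]
      | succ x => simpa [colVal] using ih hp' x
    | D => exact absurd (List.mem_cons_self) hp

lemma colVal_le (p : List Step) (hp : Step.D ∉ p) : ∀ x, colVal p x ≤ 2 * p.count Step.N := by
  induction p with
  | nil => intro x; simp [colVal]
  | cons s p ih =>
    have hp' : Step.D ∉ p := fun h => hp (List.mem_cons_of_mem _ h)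
    intro x
    cases s with
    | N => have := ih hp' x; simp [colVal, List.count_cons]; omega
    | E => cases x with
      | zero => simp [colVal]
      | succ x => have := ih hp' x; simp [colVal, List.count_cons]; omega
    | D => exact absurd (List.mem_cons_self) hp

lemma eLen_cons_N (p : List Step) : eLen (Step.N :: p) = eLen p := by
  simp [eLen, List.count_cons]

lemma eLen_cons_E (p : List Step) : eLen (Step.E :: p) = eLen p + 1 := by
  simp [eLen, List.count_cons]; omega

lemma eLen_cons_D (p : List Step) : eLen (Step.D :: p) = eLen p + 1 := by
  simp [eLen, List.count_cons]; omega

lemma colVal_append (p q : List Step) : ∀ x, x < eLen p → colVal (p ++ q) x = colVal p x := by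
  induction p with
  | nil => intro x hx; simp [eLen] at hx
  | cons s p ih =>
    intro x hx
    cases s with
    | N => rw [eLen_cons_N] at hx; simp only [List.cons_append, colVal, List.append_eq]; rw [ih x hx]
    | E => cases x with
      | zero => simp [colVal]
      | succ x => rw [eLen_cons_E] at hx; simp only [List.cons_append, colVal, List.append_eq]; exact ih x (by omega)
    | D => cases x with
      | zero => simp [colVal]
      | succ x => rw [eLen_cons_D] at hx; simp only [List.cons_append, colVal, List.append_eq]; rw [ih x (by omega)]

lemma colVal_top (p : List Step) (hp : Step.D ∉ p) :
    colVal (p ++ [Step.E]) (eLen p) = 2 * p.count Step.N := by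
  induction p with
  | nil => simp [eLen, colVal]
  | cons s p ih =>
    have hp' : Step.D ∉ p := fun h => hp (List.mem_cons_of_mem _ h)
    cases s with
    | N =>
      rw [eLen_cons_N]
      simp only [List.cons_append, colVal, List.append_eq, List.count_cons]
      rw [ih hp']; simp; ring
    | E =>
      rw [eLen_cons_E]
      simp only [List.cons_append, colVal, List.append_eq, List.count_cons]
      rw [ih hp']; simp
    | D => exact absurd (List.mem_cons_self) hp

lemma pairInd {C : List Step → Prop} (h0 : C []) (h1 : ∀ s, C [s])
    (h2 : ∀ s t p, C p → C (t :: p) → C (s :: t :: p)) : ∀ p, C p := by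
  have key : ∀ n (p : List Step), p.length ≤ n → C p := by
    intro n
    induction n with
    | zero => intro p hp; rw [List.length_eq_zero_iff.mp (Nat.le_zero.mp hp)]; exact h0
    | succ n ih =>
      intro p hp
      match p with
      | [] => exact h0
      | [s] => exact h1 s
      | s :: t :: p =>
        simp only [List.length_cons] at hp
        exact h2 s t p (ih p (by omega)) (ih (t :: p) (by simp; omega))
  exact fun p => key p.length p le_rfl

def expandD : List Step → List Step
  | [] => []
  | Step.D :: p => Step.N :: Step.E :: expandD p
  | s :: p => s :: expandD p

def expandEN : List Step → List Step
  | [] => []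
  | Step.D :: p => Step.E :: Step.N :: expandEN p
  | s :: p => s :: expandEN p

lemma expandD_count (σ : List Step) :
    (expandD σ).count Step.E = σ.count Step.E + σ.count Step.D ∧
    (expandD σ).count Step.N = σ.count Step.N + σ.count Step.D ∧
    Step.D ∉ expandD σ := by
  induction σ with
  | nil => simp [expandD]
  | cons s p ih => cases s <;> simp [expandD, List.count_cons, ih.1, ih.2.1, ih.2.2] <;> omega

lemma expandEN_count (σ : List Step) :
    (expandEN σ).count Step.E = σ.count Step.E + σ.count Step.D ∧
    (expandEN σ).count Step.N = σ.count Step.N + σ.count Step.D ∧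
    Step.D ∉ expandEN σ := by
  induction σ with
  | nil => simp [expandEN]
  | cons s p ih => cases s <;> simp [expandEN, List.count_cons, ih.1, ih.2.1, ih.2.2] <;> omega

lemma eLen_expandD (σ : List Step) : eLen (expandD σ) = eLen σ := by
  have h := expandD_count σ
  simp [eLen, h.1, List.count_eq_zero_of_not_mem h.2.2]

lemma nLen_expandD (σ : List Step) : nLen (expandD σ) = nLen σ := by
  have h := expandD_count σ
  simp [nLen, h.2.1, List.count_eq_zero_of_not_mem h.2.2]

lemma eLen_expandEN (σ : List Step) : eLen (expandEN σ) = eLen σ := by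
  have h := expandEN_count σ
  simp [eLen, h.1, List.count_eq_zero_of_not_mem h.2.2]

lemma nLen_expandEN (σ : List Step) : nLen (expandEN σ) = nLen σ := by
  have h := expandEN_count σ
  simp [nLen, h.2.1, List.count_eq_zero_of_not_mem h.2.2]

lemma colVal_expandD (σ : List Step) : ∀ x, colVal (expandD σ) x = colVal σ x + colVal σ x % 2 := by
  induction σ with
  | nil => intro x; simp [expandD, colVal]
  | cons s p ih =>
    intro x
    cases s with
    | N => have := ih x; simp [expandD, colVal]; omega
    | E => cases x with
      | zero => simp [expandD, colVal]
      | succ x => have := ih x; simp [expandD, colVal]; omega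
    | D => cases x with
      | zero => simp [expandD, colVal]
      | succ x => have := ih x; simp [expandD, colVal]; omega

lemma colVal_expandEN (σ : List Step) :
    ∀ x, colVal (expandEN σ) x + colVal σ x % 2 = colVal σ x := by
  induction σ with
  | nil => intro x; simp [expandEN, colVal]
  | cons s p ih =>
    intro x
    cases s with
    | N => have := ih x; simp [expandEN, colVal]; omega
    | E => cases x with
      | zero => simp [expandEN, colVal]
      | succ x => have := ih x; simp [expandEN, colVal]; omega
    | D => cases x with
      | zero => simp [expandEN, colVal]
      | succ x => have := ih x; simp [expandEN, colVal]; omega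


def pkPts : List Step → ℕ → ℕ → List (ℕ × ℕ)
  | [], _, _ => []
  | Step.N :: Step.E :: q, x, y => (x, y+1) :: pkPts q (x+1) (y+1)
  | Step.N :: p, x, y => pkPts p x (y+1)
  | Step.E :: p, x, y => pkPts p (x+1) y
  | Step.D :: p, x, y => pkPts p (x+1) (y+1)

def dTop : List Step → ℕ → ℕ → List (ℕ × ℕ)
  | [], _, _ => []
  | Step.N :: p, x, y => dTop p x (y+1)
  | Step.E :: p, x, y => dTop p (x+1) y
  | Step.D :: p, x, y => (x, y+1) :: dTop p (x+1) (y+1)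

def dRight : List Step → ℕ → ℕ → List (ℕ × ℕ)
  | [], _, _ => []
  | Step.N :: p, x, y => dRight p x (y+1)
  | Step.E :: p, x, y => dRight p (x+1) y
  | Step.D :: p, x, y => (x+1, y) :: dRight p (x+1) (y+1)

def ctr (T : Finset (ℕ × ℕ)) : List Step → ℕ → ℕ → List Step
  | [], _, _ => []
  | Step.N :: Step.E :: q, x, y =>
      if (x, y+1) ∈ T then Step.D :: ctr T q (x+1) (y+1)
      else Step.N :: Step.E :: ctr T q (x+1) (y+1)
  | Step.N :: p, x, y => Step.N :: ctr T p x (y+1)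
  | Step.E :: p, x, y => Step.E :: ctr T p (x+1) y
  | Step.D :: p, x, y => Step.D :: ctr T p (x+1) (y+1)

def ctv (T : Finset (ℕ × ℕ)) : List Step → ℕ → ℕ → List Step
  | [], _, _ => []
  | Step.E :: Step.N :: q, x, y =>
      if (x+1, y) ∈ T then Step.D :: ctv T q (x+1) (y+1)
      else Step.E :: Step.N :: ctv T q (x+1) (y+1)
  | Step.E :: p, x, y => Step.E :: ctv T p (x+1) y
  | Step.N :: p, x, y => Step.N :: ctv T p x (y+1)
  | Step.D :: p, x, y => Step.D :: ctv T p (x+1) (y+1)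

lemma peaks_cons₂ (s t : Step) (p : List Step) :
    peaks (s :: t :: p) = peaks (t :: p) + if s = Step.N ∧ t = Step.E then 1 else 0 := by
  have h : (s :: t :: p).zip (s :: t :: p).tail = (s, t) :: ((t :: p).zip (t :: p).tail) := by
    simp [List.zip]
  rw [peaks, h, List.count_cons]
  cases s <;> cases t <;> simp [peaks]

lemma valleys_cons₂ (s t : Step) (p : List Step) :
    valleys (s :: t :: p) = valleys (t :: p) + if s = Step.E ∧ t = Step.N then 1 else 0 := by
  have h : (s :: t :: p).zip (s :: t :: p).tail = (s, t) :: ((t :: p).zip (t :: p).tail) := by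
    simp [List.zip]
  rw [valleys, h, List.count_cons]
  cases s <;> cases t <;> simp [valleys]

lemma peaks_cons_of_ne (t : Step) (p : List Step) (ht : t ≠ Step.N) : peaks (t :: p) = peaks p := by
  cases p with
  | nil => simp [peaks]
  | cons u p => rw [peaks_cons₂]; cases t <;> simp_all

lemma valleys_cons_of_ne (t : Step) (p : List Step) (ht : t ≠ Step.E) :
    valleys (t :: p) = valleys p := by
  cases p with
  | nil => simp [valleys]
  | cons u p => rw [valleys_cons₂]; cases t <;> simp_all

lemma length_pkPts (p : List Step) : ∀ x y, (pkPts p x y).length = peaks p := by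
  induction p using pairInd with
  | h0 => intro x y; simp [pkPts, peaks]
  | h1 s => intro x y; cases s <;> simp [pkPts, peaks]
  | h2 s t p ihp ihtp =>
    intro x y
    cases s <;> cases t <;>
      simp [pkPts, peaks_cons₂, ihp, ihtp, peaks_cons_of_ne]

lemma valleys_cons_E (p : List Step) :
    valleys (Step.E :: p) = valleys p + if p.head? = some Step.N then 1 else 0 := by
  cases p with
  | nil => simp [valleys]
  | cons u p => rw [valleys_cons₂]; cases u <;> simp

lemma length_valleyPts (p : List Step) : ∀ x y, (valleyPts p x y).length = valleys p := by
  induction p using pairInd with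
  | h0 => intro x y; simp [valleyPts, valleys]
  | h1 s => intro x y; cases s <;> simp [valleyPts, valleys]
  | h2 s t p ihp ihtp =>
    intro x y
    cases s <;> cases t <;>
      simp [valleyPts, valleys_cons₂, ihp, ihtp, valleys_cons_of_ne, valleys_cons_E] <;>
      split <;> simp [Nat.add_comm]

lemma length_dTop (σ : List Step) : ∀ x y, (dTop σ x y).length = σ.count Step.D := by
  induction σ with
  | nil => intro x y; simp [dTop]
  | cons s p ih => intro x y; cases s <;> simp [dTop, List.count_cons, ih]

lemma length_dRight (σ : List Step) : ∀ x y, (dRight σ x y).length = σ.count Step.D := by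
  induction σ with
  | nil => intro x y; simp [dRight]
  | cons s p ih => intro x y; cases s <;> simp [dRight, List.count_cons, ih]

lemma peaks_eq_valleys_succ (p : List Step) (hD : Step.D ∉ p) (h1 : p.head? = some Step.N)
    (h2 : p.getLast? = some Step.E) : peaks p = valleys p + 1 := by
  have key : ∀ q : List Step, Step.D ∉ q → q ≠ [] →
      peaks q + (if q.getLast? = some Step.N then 1 else 0) =
      valleys q + (if q.head? = some Step.N then 1 else 0) := by
    intro q
    induction q using pairInd with
    | h0 => intro _ h; exact absurd rfl h
    | h1 s => intro hD _; cases s <;> simp [peaks, valleys]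
    | h2 s t p ihp ihtp =>
      intro hD _
      have hD' : Step.D ∉ t :: p := fun h => hD (List.mem_cons_of_mem _ h)
      have ih := ihtp hD' (by simp)
      rw [peaks_cons₂, valleys_cons₂]
      have hlast : (s :: t :: p).getLast? = (t :: p).getLast? := by
        rw [List.getLast?_cons_cons]
      rw [hlast]
      have hs : s ≠ Step.D := fun h => hD (h ▸ List.mem_cons_self)
      have ht : t ≠ Step.D := fun h => hD' (h ▸ List.mem_cons_self)
      cases s <;> cases t <;> simp_all <;> omega
  have := key p hD (by rintro rfl; simp at h1)
  rw [h1, h2] at this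
  simp at this
  omega

lemma pkPts_lb (p : List Step) : ∀ x y a, a ∈ pkPts p x y → x ≤ a.1 := by
  induction p using pairInd with
  | h0 => intro x y a ha; simp [pkPts] at ha
  | h1 s => intro x y a ha; cases s <;> simp [pkPts] at ha
  | h2 s t p ihp ihtp =>
    intro x y a ha
    cases s <;> cases t <;> simp only [pkPts, List.mem_cons] at ha <;>
      first
      | (rcases ha with rfl | ha
         · exact le_rfl
         · exact le_trans (Nat.le_succ x) (ihp _ _ _ ha))
      | exact ihtp _ _ _ ha
      | exact le_trans (Nat.le_succ x) (ihtp _ _ _ ha)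

lemma pkPts_nodup (p : List Step) : ∀ x y, (pkPts p x y).Nodup := by
  induction p using pairInd with
  | h0 => intro x y; simp [pkPts]
  | h1 s => intro x y; cases s <;> simp [pkPts]
  | h2 s t p ihp ihtp =>
    intro x y
    cases s with
    | N =>
      cases t with
      | E =>
        simp only [pkPts]
        refine List.nodup_cons.mpr ⟨fun h => ?_, ihp _ _⟩
        have := pkPts_lb p _ _ _ h
        simp at this
      | N => exact ihtp _ _
      | D => exact ihtp _ _
    | E => exact ihtp _ _
    | D => exact ihtp _ _

lemma valleyPts_lb (p : List Step) : ∀ x y a, a ∈ valleyPts p x y → x < a.1 := by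
  induction p with
  | nil => intro x y a ha; simp [valleyPts] at ha
  | cons s p ih =>
    intro x y a ha
    cases s with
    | N => exact ih _ _ _ ha
    | E =>
      simp only [valleyPts, List.mem_append] at ha
      rcases ha with ha | ha
      · split at ha <;> simp at ha
        subst ha; simp
      · exact lt_trans (Nat.lt_succ_self x) (ih _ _ _ ha)
    | D => exact lt_trans (Nat.lt_succ_self x) (ih _ _ _ ha)

lemma valleyPts_nodup (p : List Step) : ∀ x y, (valleyPts p x y).Nodup := by
  induction p with
  | nil => intro x y; simp [valleyPts]
  | cons s p ih =>
    intro x y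
    cases s with
    | N => exact ih _ _
    | E =>
      simp only [valleyPts]
      split
      · refine List.nodup_cons.mpr ⟨fun h => ?_, ih _ _⟩
        have := valleyPts_lb p _ _ _ h
        simp at this
      · simpa using ih _ _
    | D => exact ih _ _

lemma dTop_lb (σ : List Step) : ∀ x y a, a ∈ dTop σ x y → x ≤ a.1 ∧ y < a.2 := by
  induction σ with
  | nil => intro x y a ha; simp [dTop] at ha
  | cons s p ih =>
    intro x y a ha
    cases s with
    | N => have := ih _ _ _ ha; omega
    | E => have := ih _ _ _ ha; omega
    | D =>
      simp only [dTop, List.mem_cons] at ha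
      rcases ha with rfl | ha
      · simp
      · have := ih _ _ _ ha; omega

lemma dRight_lb (σ : List Step) : ∀ x y a, a ∈ dRight σ x y → x < a.1 := by
  induction σ with
  | nil => intro x y a ha; simp [dRight] at ha
  | cons s p ih =>
    intro x y a ha
    cases s with
    | N => exact ih _ _ _ ha
    | E => have := ih _ _ _ ha; omega
    | D =>
      simp only [dRight, List.mem_cons] at ha
      rcases ha with rfl | ha
      · simp
      · have := ih _ _ _ ha; omega

lemma highPeakPts_eq_filter (ν : List Step) (p : List Step) :
    ∀ x y, highPeakPts ν p x y = (pkPts p x y).filter (fun a => colVal ν a.1 < 2 * a.2) := by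
  induction p using pairInd with
  | h0 => intro x y; simp [highPeakPts, pkPts]
  | h1 s => intro x y; cases s <;> simp [highPeakPts, pkPts]
  | h2 s t p ihp ihtp =>
    intro x y
    cases s with
    | N =>
      cases t with
      | E =>
        show (if (Step.E :: p).head? = some Step.E ∧ colVal ν x < 2*(y+1) then [(x, y+1)] else [])
            ++ highPeakPts ν (Step.E :: p) x (y+1) = _
        have h1 : highPeakPts ν (Step.E :: p) x (y+1) = highPeakPts ν p (x+1) (y+1) := rfl
        rw [h1, ihp]
        simp only [pkPts, List.filter_cons]
        by_cases hc : colVal ν x < 2 * (y+1) <;> simp [hc]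
      | N => show highPeakPts ν (Step.N :: p) x (y+1) = _; rw [ihtp]; rfl
      | D => show highPeakPts ν (Step.D :: p) x (y+1) = _; rw [ihtp]; rfl
    | E => show highPeakPts ν (t :: p) (x+1) y = _; rw [ihtp]; rfl
    | D => show highPeakPts ν (t :: p) (x+1) (y+1) = _; rw [ihtp]; rfl

lemma dTop_sublist (σ : List Step) : ∀ x y, (dTop σ x y).Sublist (pkPts (expandD σ) x y) := by
  induction σ using pairInd with
  | h0 => intro x y; simp [dTop, expandD, pkPts]
  | h1 s =>
    intro x y
    cases s with
    | N => simp [dTop, expandD, pkPts]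
    | E => simp [dTop, expandD, pkPts]
    | D => show ((x, y+1) :: dTop [] (x+1) (y+1)).Sublist (pkPts [Step.N, Step.E] x y)
           simp [dTop, pkPts]
  | h2 s t p ihp ihtp =>
    intro x y
    cases s with
    | N =>
      cases t with
      | E =>
        show (dTop p (x+1) (y+1)).Sublist (pkPts (Step.N :: Step.E :: expandD p) x y)
        show (dTop p (x+1) (y+1)).Sublist ((x, y+1) :: pkPts (expandD p) (x+1) (y+1))
        exact (ihp _ _).cons _
      | N => exact ihtp x (y+1)
      | D => exact ihtp x (y+1)
    | E => exact ihtp (x+1) y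
    | D =>
      show ((x, y+1) :: dTop (t :: p) (x+1) (y+1)).Sublist
          ((x, y+1) :: pkPts (expandD (t :: p)) (x+1) (y+1))
      exact (ihtp _ _).cons₂ _

lemma dRight_sublist (σ : List Step) :
    ∀ x y, (dRight σ x y).Sublist (valleyPts (expandEN σ) x y) := by
  induction σ using pairInd with
  | h0 => intro x y; simp [dRight, expandEN, valleyPts]
  | h1 s =>
    intro x y
    cases s with
    | N => simp [dRight, expandEN, valleyPts]
    | E => simp [dRight, expandEN, valleyPts]
    | D =>
      show ((x+1, y) :: dRight [] (x+1) (y+1)).Sublist (valleyPts [Step.E, Step.N] x y)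
      simp [dRight, valleyPts]
  | h2 s t p ihp ihtp =>
    intro x y
    cases s with
    | N => exact ihtp x (y+1)
    | E =>
      have h : valleyPts (expandEN (Step.E :: t :: p)) x y =
          (if (expandEN (t :: p)).head? = some Step.N then [(x+1, y)] else []) ++
            valleyPts (expandEN (t :: p)) (x+1) y := rfl
      rw [h]
      exact (ihtp _ _).trans (List.sublist_append_right _ _)
    | D =>
      have h : valleyPts (expandEN (Step.D :: t :: p)) x y =
          (x+1, y) :: valleyPts (expandEN (t :: p)) (x+1) (y+1) := by
        show valleyPts (Step.E :: Step.N :: expandEN (t :: p)) x y = _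
        simp [valleyPts]
      rw [h]
      exact (ihtp _ _).cons₂ _

lemma colVal_odd_mem_dTop (σ : List Step) :
    ∀ x0 y0 x c, colVal σ x = 2*c + 1 → (x0 + x, y0 + c + 1) ∈ dTop σ x0 y0 := by
  induction σ with
  | nil => intro x0 y0 x c h; simp [colVal] at h
  | cons s p ih =>
    intro x0 y0 x c h
    cases s with
    | N =>
      simp only [colVal] at h
      cases c with
      | zero => omega
      | succ c =>
        have : colVal p x = 2*c + 1 := by omega
        have := ih x0 (y0+1) x c this
        show (x0 + x, y0 + (c+1) + 1) ∈ dTop p x0 (y0+1)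
        convert this using 2
        omega
    | E =>
      cases x with
      | zero => simp [colVal] at h
      | succ x =>
        simp only [colVal] at h
        have := ih (x0+1) y0 x c h
        show _ ∈ dTop p (x0+1) y0
        convert this using 2
        omega
    | D =>
      cases x with
      | zero =>
        simp only [colVal] at h
        have hc : c = 0 := by omega
        subst hc
        simp [dTop]
      | succ x =>
        simp only [colVal] at h
        cases c with
        | zero => omega
        | succ c =>
          have : colVal p x = 2*c + 1 := by omega
          have := ih (x0+1) (y0+1) x c this
          simp only [dTop, List.mem_cons]
          right
          convert this using 2 <;> omega

lemma mem_dTop_colVal (σ : List Step) :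
    ∀ x0 y0 a b, (a, b) ∈ dTop σ x0 y0 →
      ∃ x c, a = x0 + x ∧ b = y0 + c + 1 ∧ colVal σ x = 2*c + 1 := by
  induction σ with
  | nil => intro x0 y0 a b h; simp [dTop] at h
  | cons s p ih =>
    intro x0 y0 a b h
    cases s with
    | N =>
      obtain ⟨x, c, h1, h2, h3⟩ := ih x0 (y0+1) a b h
      exact ⟨x, c+1, h1, by omega, by simp [colVal]; omega⟩
    | E =>
      obtain ⟨x, c, h1, h2, h3⟩ := ih (x0+1) y0 a b h
      exact ⟨x+1, c, by omega, h2, by simpa [colVal] using h3⟩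
    | D =>
      simp only [dTop, List.mem_cons, Prod.mk.injEq] at h
      rcases h with ⟨rfl, rfl⟩ | h
      · exact ⟨0, 0, by omega, by omega, by simp [colVal]⟩
      · obtain ⟨x, c, h1, h2, h3⟩ := ih (x0+1) (y0+1) a b h
        exact ⟨x+1, c+1, by omega, by omega, by simp [colVal]; omega⟩

lemma colVal_odd_mem_dRight (σ : List Step) :
    ∀ x0 y0 x c, colVal σ x = 2*c + 1 → (x0 + x + 1, y0 + c) ∈ dRight σ x0 y0 := by
  induction σ with
  | nil => intro x0 y0 x c h; simp [colVal] at h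
  | cons s p ih =>
    intro x0 y0 x c h
    cases s with
    | N =>
      simp only [colVal] at h
      cases c with
      | zero => omega
      | succ c =>
        have : colVal p x = 2*c + 1 := by omega
        have := ih x0 (y0+1) x c this
        show _ ∈ dRight p x0 (y0+1)
        convert this using 2
        omega
    | E =>
      cases x with
      | zero => simp [colVal] at h
      | succ x =>
        simp only [colVal] at h
        have := ih (x0+1) y0 x c h
        show _ ∈ dRight p (x0+1) y0
        convert this using 2
        omega
    | D =>
      cases x with
      | zero =>
        simp only [colVal] at h
        have hc : c = 0 := by omega
        subst hc
        simp [dRight]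
      | succ x =>
        simp only [colVal] at h
        cases c with
        | zero => omega
        | succ c =>
          have : colVal p x = 2*c + 1 := by omega
          have := ih (x0+1) (y0+1) x c this
          simp only [dRight, List.mem_cons]
          right
          convert this using 2 <;> omega

lemma mem_dRight_colVal (σ : List Step) :
    ∀ x0 y0 a b, (a, b) ∈ dRight σ x0 y0 →
      ∃ x c, a = x0 + x + 1 ∧ b = y0 + c ∧ colVal σ x = 2*c + 1 := by
  induction σ with
  | nil => intro x0 y0 a b h; simp [dRight] at h
  | cons s p ih =>
    intro x0 y0 a b h
    cases s with
    | N =>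
      obtain ⟨x, c, h1, h2, h3⟩ := ih x0 (y0+1) a b h
      exact ⟨x, c+1, h1, by omega, by simp [colVal]; omega⟩
    | E =>
      obtain ⟨x, c, h1, h2, h3⟩ := ih (x0+1) y0 a b h
      exact ⟨x+1, c, by omega, h2, by simpa [colVal] using h3⟩
    | D =>
      simp only [dRight, List.mem_cons, Prod.mk.injEq] at h
      rcases h with ⟨rfl, rfl⟩ | h
      · exact ⟨0, 0, by omega, by omega, by simp [colVal]⟩
      · obtain ⟨x, c, h1, h2, h3⟩ := ih (x0+1) (y0+1) a b h
        exact ⟨x+1, c+1, by omega, by omega, by simp [colVal]; omega⟩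

lemma expandD_ctr (T : Finset (ℕ × ℕ)) :
    ∀ p, Step.D ∉ p → ∀ x y, expandD (ctr T p x y) = p := by
  intro p
  induction p using pairInd with
  | h0 => intro _ x y; simp [ctr, expandD]
  | h1 s =>
    intro hD x y
    cases s with
    | N => simp [ctr, expandD]
    | E => simp [ctr, expandD]
    | D => exact absurd (List.mem_cons_self) hD
  | h2 s t p ihp ihtp =>
    intro hD x y
    have hDt : Step.D ∉ t :: p := fun h => hD (List.mem_cons_of_mem _ h)
    have hDp : Step.D ∉ p := fun h => hDt (List.mem_cons_of_mem _ h)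
    cases s with
    | N =>
      cases t with
      | E =>
        show expandD (if (x, y+1) ∈ T then Step.D :: ctr T p (x+1) (y+1)
            else Step.N :: Step.E :: ctr T p (x+1) (y+1)) = _
        split <;> simp [expandD, ihp hDp]
      | N =>
        show expandD (Step.N :: ctr T (Step.N :: p) x (y+1)) = _
        simp [expandD, ihtp hDt]
      | D => exact absurd (List.mem_cons_self) hDt
    | E =>
      show expandD (Step.E :: ctr T (t :: p) (x+1) y) = _
      simp [expandD, ihtp hDt]
    | D => exact absurd (List.mem_cons_self) hD

lemma expandEN_ctv (T : Finset (ℕ × ℕ)) :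
    ∀ p, Step.D ∉ p → ∀ x y, expandEN (ctv T p x y) = p := by
  intro p
  induction p using pairInd with
  | h0 => intro _ x y; simp [ctv, expandEN]
  | h1 s =>
    intro hD x y
    cases s with
    | N => simp [ctv, expandEN]
    | E => simp [ctv, expandEN]
    | D => exact absurd (List.mem_cons_self) hD
  | h2 s t p ihp ihtp =>
    intro hD x y
    have hDt : Step.D ∉ t :: p := fun h => hD (List.mem_cons_of_mem _ h)
    have hDp : Step.D ∉ p := fun h => hDt (List.mem_cons_of_mem _ h)
    cases s with
    | E =>
      cases t with
      | N =>
        show expandEN (if (x+1, y) ∈ T then Step.D :: ctv T p (x+1) (y+1)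
            else Step.E :: Step.N :: ctv T p (x+1) (y+1)) = _
        split <;> simp [expandEN, ihp hDp]
      | E =>
        show expandEN (Step.E :: ctv T (Step.E :: p) (x+1) y) = _
        simp [expandEN, ihtp hDt]
      | D => exact absurd (List.mem_cons_self) hDt
    | N =>
      show expandEN (Step.N :: ctv T (t :: p) x (y+1)) = _
      simp [expandEN, ihtp hDt]
    | D => exact absurd (List.mem_cons_self) hD

lemma dTop_ctr (T : Finset (ℕ × ℕ)) :
    ∀ p, Step.D ∉ p → ∀ x y,
      dTop (ctr T p x y) x y = (pkPts p x y).filter (fun a => a ∈ T) := by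
  intro p
  induction p using pairInd with
  | h0 => intro _ x y; simp [ctr, dTop, pkPts]
  | h1 s =>
    intro hD x y
    cases s with
    | N => simp [ctr, dTop, pkPts]
    | E => simp [ctr, dTop, pkPts]
    | D => exact absurd (List.mem_cons_self) hD
  | h2 s t p ihp ihtp =>
    intro hD x y
    have hDt : Step.D ∉ t :: p := fun h => hD (List.mem_cons_of_mem _ h)
    have hDp : Step.D ∉ p := fun h => hDt (List.mem_cons_of_mem _ h)
    cases s with
    | N =>
      cases t with
      | E =>
        show dTop (if (x, y+1) ∈ T then Step.D :: ctr T p (x+1) (y+1)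
            else Step.N :: Step.E :: ctr T p (x+1) (y+1)) x y
            = ((x, y+1) :: pkPts p (x+1) (y+1)).filter (fun a => a ∈ T)
        rw [List.filter_cons]
        split
        · next hmem =>
          have : ((x : ℕ), y+1) ∈ T := by simpa using hmem
          simp only [this, if_pos]
          show (x, y+1) :: dTop (ctr T p (x+1) (y+1)) (x+1) (y+1) = _
          rw [ihp hDp]; simp
        · next hmem =>
          have : ¬(((x : ℕ), y+1) ∈ T) := by simpa using hmem
          simp only [this, if_neg, not_false_iff]
          show dTop (ctr T p (x+1) (y+1)) (x+1) (y+1) = _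
          rw [ihp hDp]; simp
      | N => exact ihtp hDt x (y+1)
      | D => exact absurd (List.mem_cons_self) hDt
    | E => exact ihtp hDt (x+1) y
    | D => exact absurd (List.mem_cons_self) hD

lemma dRight_ctv (T : Finset (ℕ × ℕ)) :
    ∀ p, Step.D ∉ p → ∀ x y,
      dRight (ctv T p x y) x y = (valleyPts p x y).filter (fun a => a ∈ T) := by
  intro p
  induction p using pairInd with
  | h0 => intro _ x y; simp [ctv, dRight, valleyPts]
  | h1 s =>
    intro hD x y
    cases s with
    | N => simp [ctv, dRight, valleyPts]
    | E => simp [ctv, dRight, valleyPts]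
    | D => exact absurd (List.mem_cons_self) hD
  | h2 s t p ihp ihtp =>
    intro hD x y
    have hDt : Step.D ∉ t :: p := fun h => hD (List.mem_cons_of_mem _ h)
    have hDp : Step.D ∉ p := fun h => hDt (List.mem_cons_of_mem _ h)
    cases s with
    | E =>
      cases t with
      | N =>
        have hv : valleyPts (Step.E :: Step.N :: p) x y
            = (x+1, y) :: valleyPts p (x+1) (y+1) := by
          simp [valleyPts]
        rw [hv]
        show dRight (if (x+1, y) ∈ T then Step.D :: ctv T p (x+1) (y+1)
            else Step.E :: Step.N :: ctv T p (x+1) (y+1)) x y = _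
        rw [List.filter_cons]
        split
        · next hmem =>
          have : ((x+1 : ℕ), y) ∈ T := by simpa using hmem
          simp only [this, if_pos]
          show (x+1, y) :: dRight (ctv T p (x+1) (y+1)) (x+1) (y+1) = _
          rw [ihp hDp]; simp
        · next hmem =>
          have : ¬(((x+1 : ℕ), y) ∈ T) := by simpa using hmem
          simp only [this, if_neg, not_false_iff]
          show dRight (ctv T p (x+1) (y+1)) (x+1) (y+1) = _
          rw [ihp hDp]; simp
      | E =>
        have hv : valleyPts (Step.E :: Step.E :: p) x y = valleyPts (Step.E :: p) (x+1) y := by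
          simp [valleyPts]
        rw [hv]
        exact ihtp hDt (x+1) y
      | D => exact absurd (List.mem_cons_self) hDt
    | N => exact ihtp hDt x (y+1)
    | D => exact absurd (List.mem_cons_self) hD

lemma ctr_dTop (T : Finset (ℕ × ℕ)) :
    ∀ σ x y, (∀ a ∈ dTop σ x y, a ∈ T) →
      (∀ a ∈ pkPts (expandD σ) x y, a ∈ T → a ∈ dTop σ x y) →
      ctr T (expandD σ) x y = σ := by
  intro σ
  induction σ using pairInd with
  | h0 => intro x y _ _; simp [expandD, ctr]
  | h1 s =>
    intro x y hi hii
    cases s with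
    | N => simp [expandD, ctr]
    | E => simp [expandD, ctr]
    | D =>
      have hm : ((x : ℕ), y+1) ∈ T := hi _ (by simp [dTop])
      show ctr T [Step.N, Step.E] x y = [Step.D]
      show (if (x, y+1) ∈ T then Step.D :: ctr T [] (x+1) (y+1)
          else Step.N :: Step.E :: ctr T [] (x+1) (y+1)) = [Step.D]
      rw [if_pos hm]; simp [ctr]
  | h2 s t p ihp ihtp =>
    intro x y hi hii
    cases s with
    | N =>
      cases t with
      | E =>
        -- expandD σ = N :: E :: expandD p
        have hnot : ((x : ℕ), y+1) ∉ T := by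
          intro hmem
          have h1 : ((x : ℕ), y+1) ∈ pkPts (expandD (Step.N :: Step.E :: p)) x y := by
            show _ ∈ (x, y+1) :: pkPts (expandD p) (x+1) (y+1)
            simp
          have h2 := hii _ h1 hmem
          have h3 : ((x : ℕ), y+1) ∈ dTop p (x+1) (y+1) := h2
          have := (dTop_lb p _ _ _ h3).1
          omega
        show (if (x, y+1) ∈ T then Step.D :: ctr T (expandD p) (x+1) (y+1)
            else Step.N :: Step.E :: ctr T (expandD p) (x+1) (y+1)) = Step.N :: Step.E :: p
        rw [if_neg hnot]
        have := ihp (x+1) (y+1) (fun a ha => hi a ha)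
          (fun a ha hm => hii a (by
            show a ∈ (x, y+1) :: pkPts (expandD p) (x+1) (y+1)
            exact List.mem_cons_of_mem _ ha) hm)
        rw [this]
      | N =>
        show Step.N :: ctr T (expandD (Step.N :: p)) x (y+1) = Step.N :: Step.N :: p
        rw [ihtp x (y+1) hi hii]
      | D =>
        show Step.N :: ctr T (expandD (Step.D :: p)) x (y+1) = Step.N :: Step.D :: p
        rw [ihtp x (y+1) hi hii]
    | E =>
      show Step.E :: ctr T (expandD (t :: p)) (x+1) y = Step.E :: t :: p
      rw [ihtp (x+1) y hi hii]
    | D =>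
      have hm : ((x : ℕ), y+1) ∈ T := hi _ (by
        show _ ∈ (x, y+1) :: dTop (t :: p) (x+1) (y+1); simp)
      show (if (x, y+1) ∈ T then Step.D :: ctr T (expandD (t :: p)) (x+1) (y+1)
          else Step.N :: Step.E :: ctr T (expandD (t :: p)) (x+1) (y+1)) = Step.D :: t :: p
      rw [if_pos hm]
      have := ihtp (x+1) (y+1)
        (fun a ha => hi a (by
          show a ∈ (x, y+1) :: dTop (t :: p) (x+1) (y+1)
          exact List.mem_cons_of_mem _ ha))
        (fun a ha hmem => by
          have h2 := hii a (by
            show a ∈ (x, y+1) :: pkPts (expandD (t :: p)) (x+1) (y+1)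
            exact List.mem_cons_of_mem _ ha) hmem
          have h3 : a ∈ (x, y+1) :: dTop (t :: p) (x+1) (y+1) := h2
          rcases List.mem_cons.mp h3 with rfl | h4
          · have := pkPts_lb _ _ _ _ ha; simp at this
          · exact h4)
      rw [this]

lemma ctv_dRight (T : Finset (ℕ × ℕ)) :
    ∀ σ x y, (∀ a ∈ dRight σ x y, a ∈ T) →
      (∀ a ∈ valleyPts (expandEN σ) x y, a ∈ T → a ∈ dRight σ x y) →
      ctv T (expandEN σ) x y = σ := by
  intro σ
  induction σ using pairInd with
  | h0 => intro x y _ _; simp [expandEN, ctv]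
  | h1 s =>
    intro x y hi hii
    cases s with
    | N => simp [expandEN, ctv]
    | E => simp [expandEN, ctv]
    | D =>
      have hm : ((x+1 : ℕ), y) ∈ T := hi _ (by simp [dRight])
      show (if (x+1, y) ∈ T then Step.D :: ctv T [] (x+1) (y+1)
          else Step.E :: Step.N :: ctv T [] (x+1) (y+1)) = [Step.D]
      rw [if_pos hm]; simp [ctv]
  | h2 s t p ihp ihtp =>
    intro x y hi hii
    cases s with
    | E =>
      cases t with
      | N =>
        have hvp : valleyPts (expandEN (Step.E :: Step.N :: p)) x y
            = (x+1, y) :: valleyPts (expandEN p) (x+1) (y+1) := by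
          show valleyPts (Step.E :: Step.N :: expandEN p) x y = _
          simp [valleyPts]
        have hnot : ((x+1 : ℕ), y) ∉ T := by
          intro hmem
          have h1 : ((x+1 : ℕ), y) ∈ valleyPts (expandEN (Step.E :: Step.N :: p)) x y := by
            rw [hvp]; simp
          have h2 := hii _ h1 hmem
          have h3 : ((x+1 : ℕ), y) ∈ dRight p (x+1) (y+1) := h2
          have := dRight_lb p _ _ _ h3
          omega
        show (if (x+1, y) ∈ T then Step.D :: ctv T (expandEN p) (x+1) (y+1)
            else Step.E :: Step.N :: ctv T (expandEN p) (x+1) (y+1)) = Step.E :: Step.N :: p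
        rw [if_neg hnot]
        have := ihp (x+1) (y+1) (fun a ha => hi a ha)
          (fun a ha hm => hii a (by rw [hvp]; exact List.mem_cons_of_mem _ ha) hm)
        rw [this]
      | E =>
        have hvp : valleyPts (expandEN (Step.E :: Step.E :: p)) x y
            = valleyPts (expandEN (Step.E :: p)) (x+1) y := by
          show valleyPts (Step.E :: Step.E :: expandEN p) x y = _
          simp [valleyPts, expandEN]
        show Step.E :: ctv T (expandEN (Step.E :: p)) (x+1) y = Step.E :: Step.E :: p
        rw [ihtp (x+1) y hi (fun a ha hm => hii a (by rw [hvp]; exact ha) hm)]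
      | D =>
        have hvp : valleyPts (expandEN (Step.E :: Step.D :: p)) x y
            = valleyPts (expandEN (Step.D :: p)) (x+1) y := by
          show valleyPts (Step.E :: Step.E :: Step.N :: expandEN p) x y = _
          simp [valleyPts, expandEN]
        show Step.E :: ctv T (expandEN (Step.D :: p)) (x+1) y = Step.E :: Step.D :: p
        rw [ihtp (x+1) y hi (fun a ha hm => hii a (by rw [hvp]; exact ha) hm)]
    | N =>
      show Step.N :: ctv T (expandEN (t :: p)) x (y+1) = Step.N :: t :: p
      rw [ihtp x (y+1) hi hii]
    | D =>
      have hvp : valleyPts (expandEN (Step.D :: t :: p)) x y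
          = (x+1, y) :: valleyPts (expandEN (t :: p)) (x+1) (y+1) := by
        show valleyPts (Step.E :: Step.N :: expandEN (t :: p)) x y = _
        simp [valleyPts]
      have hm : ((x+1 : ℕ), y) ∈ T := hi _ (by
        show _ ∈ (x+1, y) :: dRight (t :: p) (x+1) (y+1); simp)
      show (if (x+1, y) ∈ T then Step.D :: ctv T (expandEN (t :: p)) (x+1) (y+1)
          else Step.E :: Step.N :: ctv T (expandEN (t :: p)) (x+1) (y+1)) = Step.D :: t :: p
      rw [if_pos hm]
      have := ihtp (x+1) (y+1)
        (fun a ha => hi a (by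
          show a ∈ (x+1, y) :: dRight (t :: p) (x+1) (y+1)
          exact List.mem_cons_of_mem _ ha))
        (fun a ha hmem => by
          have h2 := hii a (by rw [hvp]; exact List.mem_cons_of_mem _ ha) hmem
          have h3 : a ∈ (x+1, y) :: dRight (t :: p) (x+1) (y+1) := h2
          rcases List.mem_cons.mp h3 with rfl | h4
          · have := valleyPts_lb _ _ _ _ ha; simp at this
          · exact h4)
      rw [this]


lemma length_filter_mem {α : Type*} [DecidableEq α] (l : List α) (hl : l.Nodup)
    (T : Finset α) (hT : ∀ a ∈ T, a ∈ l) :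
    (l.filter (fun a => a ∈ T)).length = T.card := by
  have h1 : (l.filter (fun a => a ∈ T)).toFinset = T := by
    ext a
    simp only [List.mem_toFinset, List.mem_filter, decide_eq_true_eq]
    exact ⟨fun h => h.2, fun h => ⟨hT a h, h⟩⟩
  have h2 : (l.filter (fun a => a ∈ T)).Nodup := hl.filter _
  rw [← List.toFinset_card_of_nodup h2, h1]

lemma schroder_length (ν σ : List Step) (h : IsSmallSchroder ν σ) :
    σ.length ≤ eLen ν + nLen ν := by
  have := step_length σ
  have h1 : eLen σ = eLen ν := h.1
  have h2 : nLen σ = nLen ν := h.2.1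
  simp [eLen, nLen] at h1 h2 ⊢
  omega

lemma finite_schroder (ν : List Step) (P : List Step → Prop) :
    {σ : List Step | IsSmallSchroder ν σ ∧ P σ}.Finite := by
  apply Set.Finite.subset (List.finite_length_le Step (eLen ν + nLen ν))
  intro σ hσ
  exact schroder_length ν σ hσ.1

lemma dyck_schroder (ν π : List Step) (h : IsNuDyck ν π) : IsSmallSchroder ν π :=
  ⟨h.2.1, h.2.2.1, h.2.2.2⟩

lemma finite_dyck (ν : List Step) (P : List Step → Prop) :
    {π : List Step | IsNuDyck ν π ∧ P π}.Finite := by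
  apply Set.Finite.subset (List.finite_length_le Step (eLen ν + nLen ν))
  intro σ hσ
  exact schroder_length ν σ (dyck_schroder ν σ hσ.1)

lemma dyck_length (ν π : List Step) (h : IsNuDyck ν π) : π.length = eLen ν + nLen ν := by
  have := step_length π
  have h1 : eLen π = eLen ν := h.2.1
  have h2 : nLen π = nLen ν := h.2.2.1
  have h0 : π.count Step.D = 0 := List.count_eq_zero_of_not_mem h.1
  simp [eLen, nLen, h0] at h1 h2 ⊢
  omega

lemma highPeakPts_length_le (ν : List Step) (p : List Step) :
    ∀ x y, (highPeakPts ν p x y).length ≤ p.length := by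
  induction p with
  | nil => intro x y; simp [highPeakPts]
  | cons s q ih =>
    intro x y
    cases s with
    | N =>
      show ((if _ ∧ _ then [(x, y+1)] else []) ++ highPeakPts ν q x (y+1)).length ≤ q.length + 1
      rw [List.length_append]
      have := ih x (y+1)
      split <;> simp <;> omega
    | E => exact le_trans (ih (x+1) y) (by simp)
    | D => exact le_trans (ih (x+1) (y+1)) (by simp)

lemma valleyPts_length_le (p : List Step) : ∀ x y, (valleyPts p x y).length ≤ p.length := by
  induction p with
  | nil => intro x y; simp [valleyPts]
  | cons s q ih =>
    intro x y
    cases s with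
    | N => exact le_trans (ih x (y+1)) (by simp)
    | E =>
      show ((if _ then [(x+1, y)] else []) ++ valleyPts q (x+1) y).length ≤ q.length + 1
      rw [List.length_append]
      have := ih (x+1) y
      split <;> simp <;> omega
    | D => exact le_trans (ih (x+1) (y+1)) (by simp)

lemma dyck_head (ν π : List Step) (hhead : ν.head? = some Step.N) (hπ : IsNuDyck ν π) :
    π.head? = some Step.N := by
  obtain ⟨ν', rfl⟩ : ∃ ν', ν = Step.N :: ν' := by
    cases ν with
    | nil => simp at hhead
    | cons s ν' => simp at hhead; subst hhead; exact ⟨ν', rfl⟩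
  have h0 : 2 ≤ colVal (Step.N :: ν') 0 := by simp [colVal]
  have h1 : 2 ≤ colVal π 0 := le_trans h0 (hπ.2.2.2 0)
  cases π with
  | nil => simp [colVal] at h1
  | cons s π' =>
    cases s with
    | N => rfl
    | E => simp [colVal] at h1
    | D => simp [colVal] at h1

lemma dyck_last (ν π : List Step) (hν : Step.D ∉ ν) (hhead : ν.head? = some Step.N)
    (hlast : ν.getLast? = some Step.E) (hπ : IsNuDyck ν π) :
    π.getLast? = some Step.E := by
  have hνne : ν ≠ [] := by rintro rfl; simp at hlast
  obtain ⟨ρ, hρ⟩ : ∃ ρ, ν = ρ ++ [Step.E] := by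
    refine ⟨ν.dropLast, ?_⟩
    have := List.dropLast_append_getLast hνne
    rw [List.getLast?_eq_getLast hνne] at hlast
    simp at hlast
    rw [hlast] at this
    exact this.symm
  have hρD : Step.D ∉ ρ := fun h => hν (hρ ▸ List.mem_append_left _ h)
  have heν : eLen ν = eLen ρ + 1 := by
    rw [hρ]; simp [eLen, List.count_append]; omega
  -- the column eLen ρ of ν has value 2 * (count N ν)
  have hcol : colVal ν (eLen ρ) = 2 * ν.count Step.N := by
    rw [hρ, colVal_top ρ hρD]
    congr 1
    rw [List.count_append]; simp
  have hcolπ : 2 * ν.count Step.N ≤ colVal π (eLen ρ) := hcol ▸ hπ.2.2.2 (eLen ρ)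
  have hπD : Step.D ∉ π := hπ.1
  have hcountN : π.count Step.N = ν.count Step.N := by
    have := hπ.2.2.1
    simp [nLen, List.count_eq_zero_of_not_mem hπD, List.count_eq_zero_of_not_mem hν] at this
    exact this
  have hπne : π ≠ [] := by
    rintro rfl
    simp [colVal] at hcolπ
    obtain ⟨ν', rfl⟩ : ∃ ν', ν = Step.N :: ν' := by
      cases ν with
      | nil => simp at hhead
      | cons s ν' => simp at hhead; subst hhead; exact ⟨ν', rfl⟩
    simp [List.count_cons] at hcolπ
  obtain ⟨τ, sl, hτ⟩ : ∃ τ s, π = τ ++ [s] := ⟨π.dropLast, π.getLast hπne,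
    (List.dropLast_append_getLast hπne).symm⟩
  have hτD : Step.D ∉ τ := fun h => hπD (hτ ▸ List.mem_append_left _ h)
  cases sl with
  | E =>
    rw [hτ, List.getLast?_append]; simp
  | D => exact absurd (hτ ▸ List.mem_append_right _ (by simp)) hπD
  | N =>
    exfalso
    have heτ : eLen τ = eLen π := by
      rw [hτ]; simp [eLen, List.count_append]
    have heπ : eLen π = eLen ν := hπ.2.1
    have hlt : eLen ρ < eLen τ := by omega
    have h1 : colVal π (eLen ρ) = colVal τ (eLen ρ) := by
      rw [hτ]; exact colVal_append τ [Step.N] (eLen ρ) hlt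
    have h2 : colVal τ (eLen ρ) ≤ 2 * τ.count Step.N := colVal_le τ hτD (eLen ρ)
    have h3 : π.count Step.N = τ.count Step.N + 1 := by
      rw [hτ, List.count_append]; simp
    omega

lemma mem_highPeakPts_iff (ν π : List Step) (x y : ℕ) (a : ℕ × ℕ) :
    a ∈ highPeakPts ν π x y ↔ a ∈ pkPts π x y ∧ colVal ν a.1 < 2 * a.2 := by
  rw [highPeakPts_eq_filter]
  simp [List.mem_filter]

lemma fiber_card_high (ν π : List Step) (hν : Step.D ∉ ν) (hπ : IsNuDyck ν π) (i : ℕ)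
    (S : Finset (List Step))
    (hS : ∀ σ, σ ∈ S ↔ IsSmallSchroder ν σ ∧ σ.count Step.D = i) :
    (S.filter (fun σ => expandD σ = π)).card = (highPeaks ν π).choose i := by
  classical
  have hπD : Step.D ∉ π := hπ.1
  have hHnodup : (highPeakPts ν π 0 0).Nodup := by
    rw [highPeakPts_eq_filter]
    exact (pkPts_nodup π 0 0).filter _
  set H : Finset (ℕ × ℕ) := (highPeakPts ν π 0 0).toFinset with hH
  have hHcard : H.card = highPeaks ν π := by
    rw [hH, List.toFinset_card_of_nodup hHnodup]; rfl
  have hHpk : ∀ a ∈ H, a ∈ pkPts π 0 0 := by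
    intro a ha
    rw [hH, List.mem_toFinset, mem_highPeakPts_iff] at ha
    exact ha.1
  rw [← hHcard, ← Finset.card_powersetCard]
  apply Finset.card_bij' (i := fun σ _ => (dTop σ 0 0).toFinset)
    (j := fun T _ => ctr T π 0 0)
  · -- forward map lands in powersetCard
    intro σ hσ
    rw [Finset.mem_filter] at hσ
    obtain ⟨hσS, hexp⟩ := hσ
    rw [hS] at hσS
    obtain ⟨⟨he, hn, hwa⟩, hcD⟩ := hσS
    have hsub : (dTop σ 0 0).Sublist (pkPts π 0 0) := by
      have := dTop_sublist σ 0 0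
      rwa [hexp] at this
    have hnd : (dTop σ 0 0).Nodup := hsub.nodup (pkPts_nodup π 0 0)
    rw [Finset.mem_powersetCard]
    constructor
    · intro a ha
      rw [List.mem_toFinset] at ha
      obtain ⟨a1, a2⟩ := a
      obtain ⟨x, c, hx, hc, hcol⟩ := mem_dTop_colVal σ 0 0 a1 a2 ha
      rw [hH, List.mem_toFinset, mem_highPeakPts_iff]
      refine ⟨hsub.mem ha, ?_⟩
      have h1 := hwa a1
      have h2 := colVal_even ν hν a1
      simp only [Nat.zero_add] at hx hc
      subst hx; subst hc
      simp only []
      omega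
    · rw [List.toFinset_card_of_nodup hnd, length_dTop]
      exact hcD
  · -- backward map lands in the fiber
    intro T hT
    rw [Finset.mem_powersetCard] at hT
    obtain ⟨hTH, hTcard⟩ := hT
    have hTpk : ∀ a ∈ T, a ∈ pkPts π 0 0 := fun a ha => hHpk a (hTH ha)
    have hexp : expandD (ctr T π 0 0) = π := expandD_ctr T π hπD 0 0
    have hdt : dTop (ctr T π 0 0) 0 0 = (pkPts π 0 0).filter (fun a => a ∈ T) :=
      dTop_ctr T π hπD 0 0
    have hcD : (ctr T π 0 0).count Step.D = i := by
      rw [← length_dTop _ 0 0, hdt, length_filter_mem _ (pkPts_nodup π 0 0) T hTpk, hTcard]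
    have he : eLen (ctr T π 0 0) = eLen ν := by
      rw [← eLen_expandD, hexp]; exact hπ.2.1
    have hn : nLen (ctr T π 0 0) = nLen ν := by
      rw [← nLen_expandD, hexp]; exact hπ.2.2.1
    have hwa : WeaklyAbove (ctr T π 0 0) ν := by
      intro x
      have hcv := colVal_expandD (ctr T π 0 0) x
      rw [hexp] at hcv
      rcases Nat.even_or_odd (colVal (ctr T π 0 0) x) with hpar | hpar
      · have : colVal (ctr T π 0 0) x % 2 = 0 := Nat.even_iff.mp hpar
        have := hπ.2.2.2 x
        omega
      · have hmod : colVal (ctr T π 0 0) x % 2 = 1 := Nat.odd_iff.mp hpar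
        obtain ⟨c, hc⟩ : ∃ c, colVal (ctr T π 0 0) x = 2*c + 1 := ⟨colVal (ctr T π 0 0) x / 2, by omega⟩
        have hmem := colVal_odd_mem_dTop (ctr T π 0 0) 0 0 x c hc
        rw [hdt] at hmem
        rw [List.mem_filter] at hmem
        have hmT : ((0 + x : ℕ), 0 + c + 1) ∈ T := by simpa using hmem.2
        have := hTH hmT
        rw [hH, List.mem_toFinset, mem_highPeakPts_iff] at this
        have h2 := this.2
        simp only [Nat.zero_add] at h2
        omega
    rw [Finset.mem_filter]
    exact ⟨(hS _).mpr ⟨⟨he, hn, hwa⟩, hcD⟩, hexp⟩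
  · -- left inverse
    intro σ hσ
    rw [Finset.mem_filter] at hσ
    obtain ⟨_, hexp⟩ := hσ
    rw [← hexp]
    apply ctr_dTop
    · intro a ha; exact List.mem_toFinset.mpr ha
    · intro a _ haT; exact List.mem_toFinset.mp haT
  · -- right inverse
    intro T hT
    rw [Finset.mem_powersetCard] at hT
    obtain ⟨hTH, _⟩ := hT
    have hTpk : ∀ a ∈ T, a ∈ pkPts π 0 0 := fun a ha => hHpk a (hTH ha)
    rw [dTop_ctr T π hπD 0 0]
    ext a
    rw [List.mem_toFinset, List.mem_filter]
    simp only [decide_eq_true_eq]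
    exact ⟨fun h => h.2, fun h => ⟨hTpk a h, h⟩⟩

lemma fiber_card_val (ν π : List Step) (hν : Step.D ∉ ν) (hπ : IsNuDyck ν π) (i : ℕ)
    (S : Finset (List Step))
    (hS : ∀ σ, σ ∈ S ↔ IsSmallSchroder ν σ ∧ σ.count Step.D = i) :
    (S.filter (fun σ => expandEN σ = π)).card = (valleys π).choose i := by
  classical
  have hπD : Step.D ∉ π := hπ.1
  have hVnodup : (valleyPts π 0 0).Nodup := valleyPts_nodup π 0 0
  set H : Finset (ℕ × ℕ) := (valleyPts π 0 0).toFinset with hH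
  have hHcard : H.card = valleys π := by
    rw [hH, List.toFinset_card_of_nodup hVnodup, length_valleyPts]
  have hHpk : ∀ a ∈ H, a ∈ valleyPts π 0 0 := by
    intro a ha; rwa [hH, List.mem_toFinset] at ha
  rw [← hHcard, ← Finset.card_powersetCard]
  apply Finset.card_bij' (i := fun σ _ => (dRight σ 0 0).toFinset)
    (j := fun T _ => ctv T π 0 0)
  · intro σ hσ
    rw [Finset.mem_filter] at hσ
    obtain ⟨hσS, hexp⟩ := hσ
    rw [hS] at hσS
    obtain ⟨⟨he, hn, hwa⟩, hcD⟩ := hσS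
    have hsub : (dRight σ 0 0).Sublist (valleyPts π 0 0) := by
      have := dRight_sublist σ 0 0
      rwa [hexp] at this
    have hnd : (dRight σ 0 0).Nodup := hsub.nodup hVnodup
    rw [Finset.mem_powersetCard]
    constructor
    · intro a ha
      rw [List.mem_toFinset] at ha
      rw [hH, List.mem_toFinset]
      exact hsub.mem ha
    · rw [List.toFinset_card_of_nodup hnd, length_dRight]
      exact hcD
  · intro T hT
    rw [Finset.mem_powersetCard] at hT
    obtain ⟨hTH, hTcard⟩ := hT
    have hTpk : ∀ a ∈ T, a ∈ valleyPts π 0 0 := fun a ha => hHpk a (hTH ha)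
    have hexp : expandEN (ctv T π 0 0) = π := expandEN_ctv T π hπD 0 0
    have hdt : dRight (ctv T π 0 0) 0 0 = (valleyPts π 0 0).filter (fun a => a ∈ T) :=
      dRight_ctv T π hπD 0 0
    have hcD : (ctv T π 0 0).count Step.D = i := by
      rw [← length_dRight _ 0 0, hdt, length_filter_mem _ hVnodup T hTpk, hTcard]
    have he : eLen (ctv T π 0 0) = eLen ν := by
      rw [← eLen_expandEN, hexp]; exact hπ.2.1
    have hn : nLen (ctv T π 0 0) = nLen ν := by
      rw [← nLen_expandEN, hexp]; exact hπ.2.2.1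
    have hwa : WeaklyAbove (ctv T π 0 0) ν := by
      intro x
      have hcv := colVal_expandEN (ctv T π 0 0) x
      rw [hexp] at hcv
      have := hπ.2.2.2 x
      omega
    rw [Finset.mem_filter]
    exact ⟨(hS _).mpr ⟨⟨he, hn, hwa⟩, hcD⟩, hexp⟩
  · intro σ hσ
    rw [Finset.mem_filter] at hσ
    obtain ⟨_, hexp⟩ := hσ
    rw [← hexp]
    apply ctv_dRight
    · intro a ha; exact List.mem_toFinset.mpr ha
    · intro a _ haT; exact List.mem_toFinset.mp haT
  · intro T hT
    rw [Finset.mem_powersetCard] at hT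
    obtain ⟨hTH, _⟩ := hT
    have hTpk : ∀ a ∈ T, a ∈ valleyPts π 0 0 := fun a ha => hHpk a (hTH ha)
    rw [dRight_ctv T π hπD 0 0]
    ext a
    rw [List.mem_toFinset, List.mem_filter]
    simp only [decide_eq_true_eq]
    exact ⟨fun h => h.2, fun h => ⟨hTpk a h, h⟩⟩

lemma expandD_dyck (ν σ : List Step) (h : IsSmallSchroder ν σ) : IsNuDyck ν (expandD σ) := by
  obtain ⟨he, hn, hwa⟩ := h
  refine ⟨(expandD_count σ).2.2, ?_, ?_, ?_⟩
  · rw [eLen_expandD]; exact he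
  · rw [nLen_expandD]; exact hn
  · intro x
    have := colVal_expandD σ x
    have := hwa x
    omega

lemma expandEN_dyck (ν σ : List Step) (hν : Step.D ∉ ν) (h : IsSmallSchroder ν σ) :
    IsNuDyck ν (expandEN σ) := by
  obtain ⟨he, hn, hwa⟩ := h
  refine ⟨(expandEN_count σ).2.2, ?_, ?_, ?_⟩
  · rw [eLen_expandEN]; exact he
  · rw [nLen_expandEN]; exact hn
  · intro x
    have h1 := colVal_expandEN σ x
    have h2 := hwa x
    have h3 := colVal_even ν hν x
    omega

lemma schroder_card_eq (ν : List Step) (hν : Step.D ∉ ν) (i : ℕ)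
    (S P : Finset (List Step))
    (hS : ∀ σ, σ ∈ S ↔ IsSmallSchroder ν σ ∧ σ.count Step.D = i)
    (hP : ∀ π, π ∈ P ↔ IsNuDyck ν π) :
    S.card = ∑ π ∈ P, (highPeaks ν π).choose i ∧
      S.card = ∑ π ∈ P, (valleys π).choose i := by
  classical
  constructor
  · rw [Finset.card_eq_sum_card_fiberwise (f := expandD) (t := P)
      (fun σ hσ => (hP _).mpr (expandD_dyck ν σ ((hS σ).mp hσ).1))]
    exact Finset.sum_congr rfl fun π hπ =>
      fiber_card_high ν π hν ((hP π).mp hπ) i S hS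
  · rw [Finset.card_eq_sum_card_fiberwise (f := expandEN) (t := P)
      (fun σ hσ => (hP _).mpr (expandEN_dyck ν σ hν ((hS σ).mp hσ).1))]
    exact Finset.sum_congr rfl fun π hπ =>
      fiber_card_val ν π hν ((hP π).mp hπ) i S hS

lemma inversion {α : Type*} [DecidableEq α] (P : Finset α) (f g : α → ℕ) (M : ℕ)
    (hf : ∀ a ∈ P, f a < M) (hg : ∀ a ∈ P, g a < M)
    (key : ∀ i, ∑ a ∈ P, (f a).choose i = ∑ a ∈ P, (g a).choose i) :
    ∀ i, (P.filter fun a => f a = i).card = (P.filter fun a => g a = i).card := by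
  classical
  have expand : ∀ (h : α → ℕ), (∀ a ∈ P, h a < M) → ∀ i,
      ∑ a ∈ P, (h a).choose i = (P.filter fun a => h a = i).card +
        ∑ k ∈ Finset.range M, (if i < k then Nat.choose k i *
          (P.filter fun a => h a = k).card else 0) := by
    intro h hh i
    have step1 : ∀ a ∈ P, (h a).choose i =
        (if h a = i then 1 else 0) + (if i < h a then (h a).choose i else 0) := by
      intro a _
      rcases lt_trichotomy (h a) i with hlt | heq | hgt
      · simp [Nat.choose_eq_zero_of_lt hlt, Nat.ne_of_lt hlt, not_lt_of_gt hlt]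
      · simp [heq]
      · simp [Nat.ne_of_gt hgt, hgt]
    rw [Finset.sum_congr rfl step1, Finset.sum_add_distrib]
    congr 1
    · rw [Finset.card_filter]
    · rw [← Finset.sum_fiberwise_of_maps_to (g := h) (t := Finset.range M)
        (fun a ha => Finset.mem_range.mpr (hh a ha))]
      apply Finset.sum_congr rfl
      intro k _
      split
      · next hik =>
        rw [Finset.sum_congr rfl (fun a ha => ?_), Finset.sum_const, smul_eq_mul, mul_comm]
        have := (Finset.mem_filter.mp ha).2
        rw [this, if_pos hik]
      · next hik =>
        apply Finset.sum_eq_zero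
        intro a ha
        have := (Finset.mem_filter.mp ha).2
        rw [this, if_neg hik]
  have main : ∀ d i, M ≤ i + d →
      (P.filter fun a => f a = i).card = (P.filter fun a => g a = i).card := by
    intro d
    induction d with
    | zero =>
      intro i hi
      have h1 : P.filter (fun a => f a = i) = ∅ := by
        apply Finset.filter_eq_empty_iff.mpr
        intro a ha; have := hf a ha; omega
      have h2 : P.filter (fun a => g a = i) = ∅ := by
        apply Finset.filter_eq_empty_iff.mpr
        intro a ha; have := hg a ha; omega
      rw [h1, h2]
    | succ d ih =>
      intro i hi
      by_cases hcase : M ≤ i + d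
      · exact ih i hcase
      · have hf' := expand f hf i
        have hg' := expand g hg i
        have hsum : ∑ k ∈ Finset.range M, (if i < k then Nat.choose k i *
              (P.filter fun a => f a = k).card else 0)
            = ∑ k ∈ Finset.range M, (if i < k then Nat.choose k i *
              (P.filter fun a => g a = k).card else 0) := by
          apply Finset.sum_congr rfl
          intro k _
          split
          · next hik => rw [ih k (by omega)]
          · rfl
        have := key i
        omega
  intro i
  exact main M i (by omega)


lemma finite_dyck' (ν : List Step) : {π : List Step | IsNuDyck ν π}.Finite := by
  apply Set.Finite.subset (List.finite_length_le Step (eLen ν + nLen ν))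
  intro σ hσ
  exact schroder_length ν σ (dyck_schroder ν σ hσ)

/-- For a lattice path ν beginning with a north step and ending with an east
step, ν-Dyck paths with exactly `i` high peaks are in bijection with ν-Dyck paths with exactly
`i+1` peaks. -/
theorem highPeaks_equiv_peaks (ν : List Step) (hν : IsLatticePath ν)
    (hhead : ν.head? = some Step.N) (hlast : ν.getLast? = some Step.E) (i : ℕ) :
    Nonempty ({π : List Step // IsNuDyck ν π ∧ highPeaks ν π = i}
      ≃ {π : List Step // IsNuDyck ν π ∧ peaks π = i + 1}) := by
  classical
  have hνD : Step.D ∉ ν := hν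
  set P : Finset (List Step) := (finite_dyck' ν).toFinset with hPdef
  have hP : ∀ π, π ∈ P ↔ IsNuDyck ν π := fun π => Set.Finite.mem_toFinset _
  have key : ∀ j, ∑ π ∈ P, (highPeaks ν π).choose j = ∑ π ∈ P, (valleys π).choose j := by
    intro j
    set S : Finset (List Step) :=
      (finite_schroder ν (fun σ => σ.count Step.D = j)).toFinset with hSdef
    have hS : ∀ σ, σ ∈ S ↔ IsSmallSchroder ν σ ∧ σ.count Step.D = j :=
      fun σ => Set.Finite.mem_toFinset _
    obtain ⟨h1, h2⟩ := schroder_card_eq ν hνD j S P hS hP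
    omega
  set M : ℕ := eLen ν + nLen ν + 1 with hM
  have hbound1 : ∀ π ∈ P, highPeaks ν π < M := by
    intro π hπ
    have h1 := highPeakPts_length_le ν π 0 0
    have h2 := dyck_length ν π ((hP π).mp hπ)
    show (highPeakPts ν π 0 0).length < M
    omega
  have hbound2 : ∀ π ∈ P, valleys π < M := by
    intro π hπ
    have h1 := valleyPts_length_le π 0 0
    have h2 := dyck_length ν π ((hP π).mp hπ)
    rw [← length_valleyPts π 0 0]
    omega
  have hcards := inversion P (highPeaks ν) valleys M hbound1 hbound2 key i
  have hfilter : P.filter (fun π => valleys π = i) = P.filter (fun π => peaks π = i + 1) := by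
    apply Finset.filter_congr
    intro π hπ
    have hπd := (hP π).mp hπ
    have := peaks_eq_valleys_succ π hπd.1 (dyck_head ν π hhead hπd)
      (dyck_last ν π hνD hhead hlast hπd)
    constructor <;> intro h <;> omega
  rw [hfilter] at hcards
  have e1 : {π : List Step // IsNuDyck ν π ∧ highPeaks ν π = i}
      ≃ {π : List Step // π ∈ P.filter (fun π => highPeaks ν π = i)} :=
    Equiv.subtypeEquivRight (fun π => by
      rw [Finset.mem_filter, hP])
  have e2 : {π : List Step // IsNuDyck ν π ∧ peaks π = i + 1}
      ≃ {π : List Step // π ∈ P.filter (fun π => peaks π = i + 1)} :=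
    Equiv.subtypeEquivRight (fun π => by
      rw [Finset.mem_filter, hP])
  have hcard : Fintype.card {π : List Step // π ∈ P.filter (fun π => highPeaks ν π = i)}
      = Fintype.card {π : List Step // π ∈ P.filter (fun π => peaks π = i + 1)} := by
    rw [Fintype.card_coe, Fintype.card_coe]
    exact hcards
  obtain ⟨e⟩ := Fintype.card_eq.mp hcard
  exact ⟨e1.trans (e.trans e2.symm)⟩
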